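/- Let K ≥ 2 be an integer, let κ ≠ 0 be real, and let α_1,…,α_K and h_1,…,h_K be real numbers. On the chamber {x ∈ ℝ^K : x_1 < x_2 < ⋯ < x_K} define Φ(x) = ∏_{1≤j<k≤K} (x_k−x_j)^{2α_jα_k}. Then for every j ∈ {1,…,K}: (κ/4)∂_j²Φ(x) + Σ_{k≠j} [∂_kΦ(x)/(x_k−x_j) − h_k·Φ(x)/(x_k−x_j)²] = [ Σ_{k≠j, l≠j, k≠l} α_kα_l(κα_j²−1)/((x_k−x_j)(x_l−x_j)) + Σ_{k≠j} (α_jα_k(κα_jα_k−κ/2+2) − h_k)/(x_k−x_j)² ] · Φ(x), as an identity of smooth functions on the chamber. -/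

import Mathlib

open Filter Set Finset
open Topology

noncomputable section

/-- The chamber {x ∈ ℝ^K : x₁ < x₂ < ⋯ < x_K}. -/
def chamber (n : ℕ) : Set (Fin n → ℝ) := {x | ∀ i j : Fin n, i < j → x i < x j}

/-- The partial derivative ∂ⱼ. -/
def pd {n : ℕ} (j : Fin n) (F : (Fin n → ℝ) → ℝ) (x : Fin n → ℝ) : ℝ :=
  fderiv ℝ F x (Pi.single j 1)

/-- The second partial derivative ∂ⱼ². -/
def pd2 {n : ℕ} (j : Fin n) (F : (Fin n → ℝ) → ℝ) (x : Fin n → ℝ) : ℝ :=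
  pd j (fun y => pd j F y) x

namespace CGaux

variable {K : ℕ}

lemma isOpen_chamber (n : ℕ) : IsOpen (chamber n) := by
  have : chamber n = ⋂ (p : Fin n × Fin n), ⋂ (_ : p.1 < p.2), {x : Fin n → ℝ | x p.1 < x p.2} := by
    ext x; simp [chamber]
  rw [this]
  exact isOpen_iInter_of_finite fun p => isOpen_iInter_of_finite fun _ =>
    isOpen_lt (continuous_apply p.1) (continuous_apply p.2)

lemma chamber_sub_pos {x : Fin K → ℝ} (hx : x ∈ chamber K) {i j : Fin K} (h : j < i) :
    0 < x i - x j := sub_pos.mpr (hx j i h)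

lemma chamber_ne {x : Fin K → ℝ} (hx : x ∈ chamber K) {i j : Fin K} (h : i ≠ j) :
    x i - x j ≠ 0 := by
  rcases h.lt_or_gt with h' | h'
  · exact ne_of_lt (by linarith [hx i j h'])
  · exact ne_of_gt (chamber_sub_pos hx h')

variable (α : Fin K → ℝ)

def G : (Fin K → ℝ) → ℝ := fun x => ∏ k : Fin K, ∏ j : Fin K,
  if j < k then (x k - x j) ^ (2 * α j * α k) else 1

def P (K : ℕ) : Finset (Fin K × Fin K) := Finset.univ.filter (fun p => p.2 < p.1)

def Fc (p : Fin K × Fin K) : (Fin K → ℝ) → ℝ := fun y => (y p.1 - y p.2) ^ (2 * α p.2 * α p.1)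

lemma G_eq (y : Fin K → ℝ) : G α y = ∏ p ∈ P K, Fc α p y := by
  rw [P, Finset.prod_filter, ← Finset.univ_product_univ, Finset.prod_product]
  rfl

def proj2 (p : Fin K × Fin K) : (Fin K → ℝ) →L[ℝ] ℝ :=
  (ContinuousLinearMap.proj p.1 : (Fin K → ℝ) →L[ℝ] ℝ)
    - (ContinuousLinearMap.proj p.2 : (Fin K → ℝ) →L[ℝ] ℝ)

lemma proj2_apply (p : Fin K × Fin K) (v : Fin K → ℝ) : proj2 p v = v p.1 - v p.2 := rfl

lemma hasFDerivAt_Fc {x : Fin K → ℝ} (hx : x ∈ chamber K) {p : Fin K × Fin K} (hp : p ∈ P K) :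
    HasFDerivAt (Fc α p)
      ((2 * α p.2 * α p.1 * (x p.1 - x p.2) ^ (2 * α p.2 * α p.1 - 1)) • proj2 p) x := by
  have hp' : p.2 < p.1 := by simpa [P] using hp
  have h0 : x p.1 - x p.2 ≠ 0 := ne_of_gt (chamber_sub_pos hx hp')
  have h1 : HasFDerivAt (fun y : Fin K → ℝ => y p.1 - y p.2) (proj2 p) x := by
    have := (proj2 (K := K) p).hasFDerivAt (x := x)
    exact this.congr_of_eventuallyEq (by filter_upwards with y using rfl)
  exact (Real.hasDerivAt_rpow_const (p := 2 * α p.2 * α p.1) (Or.inl h0)).comp_hasFDerivAt x h1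

def DG (x : Fin K → ℝ) : (Fin K → ℝ) →L[ℝ] ℝ :=
  ∑ p ∈ P K, (∏ q ∈ (P K).erase p, Fc α q x) •
    ((2 * α p.2 * α p.1 * (x p.1 - x p.2) ^ (2 * α p.2 * α p.1 - 1)) • proj2 p)

lemma hasFDerivAt_G {x : Fin K → ℝ} (hx : x ∈ chamber K) :
    HasFDerivAt (G α) (DG α x) x := by
  have hG : G α = (fun y => ∏ p ∈ P K, Fc α p y) := funext (G_eq α)
  rw [hG]
  exact HasFDerivAt.finset_prod (fun p hp => hasFDerivAt_Fc α hx hp)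


lemma sum_P (x : Fin K → ℝ) (m : Fin K) :
    ∑ p ∈ P K, 2 * α p.2 * α p.1 *
        ((if p.1 = m then (1:ℝ) else 0) - (if p.2 = m then 1 else 0)) / (x p.1 - x p.2)
    = ∑ k ∈ Finset.univ.erase m, 2 * α m * α k / (x m - x k) := by
  rw [P, Finset.sum_filter, ← Finset.univ_product_univ, Finset.sum_product]
  rw [← Finset.filter_ne', Finset.sum_filter]
  have step1 : ∀ k j : Fin K,
      (if j < k then 2 * α j * α k *
          ((if k = m then (1:ℝ) else 0) - (if j = m then 1 else 0)) / (x k - x j) else 0)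
      = (if k = m then (if j < k then 2 * α j * α k / (x k - x j) else 0) else 0)
        - (if j = m then (if j < k then 2 * α j * α k / (x k - x j) else 0) else 0) := by
    intro k j
    split_ifs <;> ring
  calc ∑ k : Fin K, ∑ j : Fin K,
        (if j < k then 2 * α j * α k *
          ((if k = m then (1:ℝ) else 0) - (if j = m then 1 else 0)) / (x k - x j) else 0)
      = ∑ k : Fin K, ∑ j : Fin K,
        ((if k = m then (if j < k then 2 * α j * α k / (x k - x j) else 0) else 0)
          - (if j = m then (if j < k then 2 * α j * α k / (x k - x j) else 0) else 0)) := by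
        refine Finset.sum_congr rfl fun k _ => Finset.sum_congr rfl fun j _ => step1 k j
    _ = (∑ k : Fin K, ∑ j : Fin K,
          (if k = m then (if j < k then 2 * α j * α k / (x k - x j) else 0) else 0))
        - (∑ k : Fin K, ∑ j : Fin K,
          (if j = m then (if j < k then 2 * α j * α k / (x k - x j) else 0) else 0)) := by
        rw [← Finset.sum_sub_distrib]
        exact Finset.sum_congr rfl fun k _ => by rw [Finset.sum_sub_distrib]
    _ = (∑ j : Fin K, (if j < m then 2 * α j * α m / (x m - x j) else 0))
        - (∑ k : Fin K, (if m < k then 2 * α m * α k / (x k - x m) else 0)) := by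
        congr 1
        · rw [Finset.sum_comm]
          rw [Finset.sum_congr rfl fun j (_ : j ∈ Finset.univ) =>
            Finset.sum_ite_eq' Finset.univ m
              (fun k => if j < k then 2 * α j * α k / (x k - x j) else 0)]
          simp
        · rw [Finset.sum_congr rfl fun k (_ : k ∈ Finset.univ) =>
            Finset.sum_ite_eq' Finset.univ m
              (fun j => if j < k then 2 * α j * α k / (x k - x j) else 0)]
          simp
    _ = ∑ k : Fin K, (if k ≠ m then 2 * α m * α k / (x m - x k) else 0) := by
        rw [← Finset.sum_sub_distrib]
        refine Finset.sum_congr rfl fun k _ => ?_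
        rcases lt_trichotomy k m with h | h | h
        · simp only [if_pos h, if_neg (asymm h), if_pos h.ne, sub_zero]
          ring
        · simp [h]
        · simp only [if_neg (asymm h), if_pos h, if_pos h.ne', zero_sub]
          rw [show x m - x k = -(x k - x m) by ring, div_neg]

/-- The logarithmic derivative sum. -/
def T (m : Fin K) : (Fin K → ℝ) → ℝ := fun y =>
  ∑ k ∈ Finset.univ.erase m, 2 * α m * α k / (y m - y k)

lemma DG_apply_single {x : Fin K → ℝ} (hx : x ∈ chamber K) (m : Fin K) :
    DG α x (Pi.single m 1) = G α x * T α m x := by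
  have happ : DG α x (Pi.single m 1)
      = ∑ p ∈ P K, (∏ q ∈ (P K).erase p, Fc α q x) *
          (2 * α p.2 * α p.1 * (x p.1 - x p.2) ^ (2 * α p.2 * α p.1 - 1) *
            ((if p.1 = m then (1:ℝ) else 0) - (if p.2 = m then 1 else 0))) := by
    rw [DG, ContinuousLinearMap.sum_apply]
    refine Finset.sum_congr rfl fun p hp => ?_
    rw [ContinuousLinearMap.smul_apply, ContinuousLinearMap.smul_apply, proj2_apply]
    rw [Pi.single_apply, Pi.single_apply]
    simp only [smul_eq_mul]
  rw [happ]
  have hterm : ∀ p ∈ P K,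
      (∏ q ∈ (P K).erase p, Fc α q x) *
          (2 * α p.2 * α p.1 * (x p.1 - x p.2) ^ (2 * α p.2 * α p.1 - 1) *
            ((if p.1 = m then (1:ℝ) else 0) - (if p.2 = m then 1 else 0)))
      = G α x * (2 * α p.2 * α p.1 *
          ((if p.1 = m then (1:ℝ) else 0) - (if p.2 = m then 1 else 0)) / (x p.1 - x p.2)) := by
    intro p hp
    have hp' : p.2 < p.1 := by simpa [P] using hp
    have hpos : 0 < x p.1 - x p.2 := chamber_sub_pos hx hp'
    rw [Real.rpow_sub_one (ne_of_gt hpos)]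
    rw [G_eq, ← Finset.prod_erase_mul (P K) (fun q => Fc α q x) hp]
    unfold Fc
    ring
  rw [Finset.sum_congr rfl hterm, ← Finset.mul_sum, T, sum_P]

lemma pd_G (m : Fin K) {x : Fin K → ℝ} (hx : x ∈ chamber K) :
    pd m (G α) x = G α x * T α m x := by
  rw [pd, (hasFDerivAt_G α hx).fderiv]
  exact DG_apply_single α hx m

/-- Derivative of T j. -/
def DT (j : Fin K) (x : Fin K → ℝ) : (Fin K → ℝ) →L[ℝ] ℝ :=
  ∑ k ∈ Finset.univ.erase j,
    (2 * α j * α k) • ((-((x j - x k) ^ 2)⁻¹) • proj2 ((j, k) : Fin K × Fin K))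

lemma hasFDerivAt_T (j : Fin K) {x : Fin K → ℝ} (hx : x ∈ chamber K) :
    HasFDerivAt (T α j) (DT α j x) x := by
  unfold T DT
  apply HasFDerivAt.fun_sum
  intro k hk
  have hkj : k ≠ j := Finset.ne_of_mem_erase hk
  have hne : x j - x k ≠ 0 := chamber_ne hx (Ne.symm hkj)
  have h1 : HasFDerivAt (fun y : Fin K → ℝ => y j - y k)
      (proj2 ((j, k) : Fin K × Fin K)) x := by
    have := (proj2 (K := K) ((j, k) : Fin K × Fin K)).hasFDerivAt (x := x)
    exact this.congr_of_eventuallyEq (by filter_upwards with y using rfl)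
  have h2 : HasFDerivAt (fun y : Fin K → ℝ => (y j - y k)⁻¹)
      ((-((x j - x k) ^ 2)⁻¹) • proj2 ((j, k) : Fin K × Fin K)) x :=
    (hasDerivAt_inv hne).comp_hasFDerivAt x h1
  have h3 := h2.const_mul (2 * α j * α k)
  refine h3.congr_of_eventuallyEq ?_
  filter_upwards with y
  rw [div_eq_mul_inv]

lemma DT_apply_single (j : Fin K) (x : Fin K → ℝ) :
    DT α j x (Pi.single j 1) =
      ∑ k ∈ Finset.univ.erase j, (-(2 * α j * α k) / (x j - x k) ^ 2) := by
  rw [DT, ContinuousLinearMap.sum_apply]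
  refine Finset.sum_congr rfl fun k hk => ?_
  have hkj : k ≠ j := Finset.ne_of_mem_erase hk
  rw [ContinuousLinearMap.smul_apply, ContinuousLinearMap.smul_apply, proj2_apply]
  simp only [smul_eq_mul]
  rw [Pi.single_eq_same, Pi.single_eq_of_ne hkj]
  field_simp
  ring


lemma pd2_G (j : Fin K) {x : Fin K → ℝ} (hx : x ∈ chamber K) :
    pd2 j (G α) x = G α x * ((T α j x) ^ 2
      - ∑ k ∈ Finset.univ.erase j, 2 * α j * α k / (x j - x k) ^ 2) := by
  have hev : (fun y => pd j (G α) y) =ᶠ[𝓝 x] (fun y => G α y * T α j y) := by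
    filter_upwards [(isOpen_chamber K).mem_nhds hx] with y hy
    exact pd_G α j hy
  have hmul : HasFDerivAt (fun y => G α y * T α j y)
      (G α x • DT α j x + T α j x • DG α x) x :=
    (hasFDerivAt_G α hx).mul (hasFDerivAt_T α j hx)
  unfold pd2 pd
  rw [Filter.EventuallyEq.fderiv_eq (by exact hev), hmul.fderiv]
  rw [ContinuousLinearMap.add_apply, ContinuousLinearMap.smul_apply,
    ContinuousLinearMap.smul_apply, smul_eq_mul, smul_eq_mul,
    DT_apply_single, DG_apply_single α hx]
  rw [show (∑ k ∈ Finset.univ.erase j, (-(2 * α j * α k) / (x j - x k) ^ 2))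
      = -∑ k ∈ Finset.univ.erase j, 2 * α j * α k / (x j - x k) ^ 2 by
    rw [← Finset.sum_neg_distrib]
    exact Finset.sum_congr rfl fun k _ => by rw [neg_div]]
  ring


lemma scalar_identity (κ : ℝ) (h : Fin K → ℝ) (j : Fin K) {x : Fin K → ℝ}
    (hx : x ∈ chamber K) :
    κ/4 * ((T α j x) ^ 2 - ∑ k ∈ Finset.univ.erase j, 2 * α j * α k / (x j - x k) ^ 2)
      + ∑ k ∈ Finset.univ.erase j, (T α k x / (x k - x j) - h k / (x k - x j) ^ 2)
    = (∑ k ∈ Finset.univ.erase j, ∑ l ∈ (Finset.univ.erase j).erase k,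
        α k * α l * (κ * (α j) ^ 2 - 1) / ((x k - x j) * (x l - x j)))
      + ∑ k ∈ Finset.univ.erase j,
        (α j * α k * (κ * α j * α k - κ/2 + 2) - h k) / (x k - x j) ^ 2 := by
  classical
  set E : Finset (Fin K) := Finset.univ.erase j with hE
  have hdk : ∀ k ∈ E, x k - x j ≠ 0 := fun k hk =>
    chamber_ne hx (Finset.ne_of_mem_erase hk)
  have hdk' : ∀ k ∈ E, x j - x k ≠ 0 := fun k hk =>
    chamber_ne hx (Ne.symm (Finset.ne_of_mem_erase hk))
  -- (1) expansion of the square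
  have e1 : (T α j x) ^ 2 = (∑ k ∈ E, 2 * α j * α k / (x j - x k))
      * (∑ l ∈ E, 2 * α j * α l / (x j - x l)) := by
    rw [sq]; rfl
  have e2 : ∀ k ∈ E, (∑ l ∈ E, (2 * α j * α k / (x j - x k)) * (2 * α j * α l / (x j - x l)))
      = (∑ l ∈ E.erase k, (2 * α j * α k / (x j - x k)) * (2 * α j * α l / (x j - x l)))
        + (2 * α j * α k / (x j - x k)) ^ 2 := by
    intro k hk
    rw [← Finset.sum_erase_add E _ hk, sq]
  have hT2 : (T α j x) ^ 2
      = (∑ k ∈ E, ∑ l ∈ E.erase k,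
          (2 * α j * α k / (x j - x k)) * (2 * α j * α l / (x j - x l)))
        + ∑ k ∈ E, (2 * α j * α k / (x j - x k)) ^ 2 := by
    rw [e1, Finset.sum_mul_sum, Finset.sum_congr rfl e2, Finset.sum_add_distrib]
  -- (2) expansion of the first-order terms
  have hTk : ∑ k ∈ E, T α k x / (x k - x j)
      = (∑ k ∈ E, 2 * α k * α j / ((x k - x j) * (x k - x j)))
        + ∑ k ∈ E, ∑ m ∈ E.erase k, 2 * α k * α m / ((x k - x m) * (x k - x j)) := by
    rw [← Finset.sum_add_distrib]
    refine Finset.sum_congr rfl fun k hk => ?_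
    have hjk : j ∈ Finset.univ.erase k :=
      Finset.mem_erase.mpr ⟨(Finset.ne_of_mem_erase hk).symm, Finset.mem_univ j⟩
    have hTval : T α k x = 2 * α k * α j / (x k - x j)
        + ∑ m ∈ E.erase k, 2 * α k * α m / (x k - x m) := by
      show (∑ m ∈ Finset.univ.erase k, 2 * α k * α m / (x k - x m)) = _
      rw [← Finset.add_sum_erase _ _ hjk]
      congr 1
      rw [hE, Finset.erase_right_comm]
    rw [hTval, add_div, Finset.sum_div]
    simp only [div_div]
  -- (3) symmetrization
  have hswap : (∑ k ∈ E, ∑ m ∈ E.erase k, 2 * α k * α m / ((x k - x m) * (x k - x j)))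
      = ∑ k ∈ E, ∑ m ∈ E.erase k, 2 * α m * α k / ((x m - x k) * (x m - x j)) := by
    refine Finset.sum_comm' ?_
    intro a b
    simp only [hE, Finset.mem_erase, Finset.mem_univ, and_true]
    constructor
    · rintro ⟨ha, hba, hbj⟩
      exact ⟨⟨Ne.symm hba, ha⟩, hbj⟩
    · rintro ⟨⟨hab, haj⟩, hbj⟩
      exact ⟨haj, Ne.symm hab, hbj⟩
  have hpair : ∀ k ∈ E, ∀ m ∈ E.erase k,
      2 * α k * α m / ((x k - x m) * (x k - x j)) + 2 * α m * α k / ((x m - x k) * (x m - x j))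
      = -(α k * α m / ((x k - x j) * (x m - x j)))
        + -(α k * α m / ((x k - x j) * (x m - x j))) := by
    intro k hk m hm
    have h1 : x k - x j ≠ 0 := hdk k hk
    have h2 : x m - x j ≠ 0 := hdk m (Finset.mem_of_mem_erase hm)
    have h3 : x k - x m ≠ 0 := chamber_ne hx (Ne.symm (Finset.ne_of_mem_erase hm))
    have h4 : x m - x k ≠ 0 := sub_ne_zero.mpr (Ne.symm (sub_ne_zero.mp h3))
    field_simp
    ring
  have hsym : (∑ k ∈ E, ∑ m ∈ E.erase k, 2 * α k * α m / ((x k - x m) * (x k - x j)))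
      = ∑ k ∈ E, ∑ m ∈ E.erase k, -(α k * α m / ((x k - x j) * (x m - x j))) := by
    have e : (∑ k ∈ E, ∑ m ∈ E.erase k, 2 * α k * α m / ((x k - x m) * (x k - x j)))
        + (∑ k ∈ E, ∑ m ∈ E.erase k, 2 * α k * α m / ((x k - x m) * (x k - x j)))
        = ∑ k ∈ E, ∑ m ∈ E.erase k,
            (2 * α k * α m / ((x k - x m) * (x k - x j))
              + 2 * α m * α k / ((x m - x k) * (x m - x j))) := by
      nth_rewrite 2 [hswap]
      rw [← Finset.sum_add_distrib]
      exact Finset.sum_congr rfl fun k hk => by rw [← Finset.sum_add_distrib]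
    have e' : (∑ k ∈ E, ∑ m ∈ E.erase k,
            (2 * α k * α m / ((x k - x m) * (x k - x j))
              + 2 * α m * α k / ((x m - x k) * (x m - x j))))
        = (∑ k ∈ E, ∑ m ∈ E.erase k, -(α k * α m / ((x k - x j) * (x m - x j))))
          + (∑ k ∈ E, ∑ m ∈ E.erase k, -(α k * α m / ((x k - x j) * (x m - x j)))) := by
      rw [← Finset.sum_add_distrib]
      refine Finset.sum_congr rfl fun k hk => ?_
      rw [← Finset.sum_add_distrib]
      exact Finset.sum_congr rfl fun m hm => hpair k hk m hm
    linarith [e, e']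
  -- (4) assembly
  have hsum2 : ∑ k ∈ E, (T α k x / (x k - x j) - h k / (x k - x j) ^ 2)
      = (∑ k ∈ E, T α k x / (x k - x j)) - ∑ k ∈ E, h k / (x k - x j) ^ 2 :=
    Finset.sum_sub_distrib _ _
  have hR2 : (∑ k ∈ E, ∑ l ∈ E.erase k,
        α k * α l * (κ * (α j) ^ 2 - 1) / ((x k - x j) * (x l - x j)))
      = κ/4 * (∑ k ∈ E, ∑ l ∈ E.erase k,
          (2 * α j * α k / (x j - x k)) * (2 * α j * α l / (x j - x l)))
        + ∑ k ∈ E, ∑ l ∈ E.erase k, -(α k * α l / ((x k - x j) * (x l - x j))) := by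
    rw [Finset.mul_sum, ← Finset.sum_add_distrib]
    refine Finset.sum_congr rfl fun k hk => ?_
    rw [Finset.mul_sum, ← Finset.sum_add_distrib]
    refine Finset.sum_congr rfl fun l hl => ?_
    have h1 : x k - x j ≠ 0 := hdk k hk
    have h2 : x l - x j ≠ 0 := hdk l (Finset.mem_of_mem_erase hl)
    have h1' : x j - x k ≠ 0 := hdk' k hk
    have h2' : x j - x l ≠ 0 := hdk' l (Finset.mem_of_mem_erase hl)
    field_simp
    ring
  have hR1 : (∑ k ∈ E, (α j * α k * (κ * α j * α k - κ/2 + 2) - h k) / (x k - x j) ^ 2)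
      = κ/4 * (∑ k ∈ E, (2 * α j * α k / (x j - x k)) ^ 2)
        - κ/4 * (∑ k ∈ E, 2 * α j * α k / (x j - x k) ^ 2)
        + (∑ k ∈ E, 2 * α k * α j / ((x k - x j) * (x k - x j)))
        - ∑ k ∈ E, h k / (x k - x j) ^ 2 := by
    rw [Finset.mul_sum, Finset.mul_sum, ← Finset.sum_sub_distrib, ← Finset.sum_add_distrib,
      ← Finset.sum_sub_distrib]
    refine Finset.sum_congr rfl fun k hk => ?_
    have h1 : x k - x j ≠ 0 := hdk k hk
    have h1' : x j - x k ≠ 0 := hdk' k hk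
    field_simp
    ring
  rw [hT2, hsum2, hTk, hsym, hR2, hR1]
  ring

end CGaux

/-- the algebraic identity satisfied by the Coulomb gas product
Φ(x) = ∏_{j<k} (x_k - x_j)^{2αⱼα_k} under the null-state operator with general
weights h_k. -/
theorem coulomb_gas_product_identity
    (K : ℕ) (hK : 2 ≤ K) (κ : ℝ) (hκ : κ ≠ 0)
    (α h : Fin K → ℝ)
    (Φ : (Fin K → ℝ) → ℝ)
    (hΦ : ∀ x, Φ x = ∏ k : Fin K, ∏ j : Fin K,
        if j < k then (x k - x j) ^ (2 * α j * α k) else 1)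
    (j : Fin K) :
    ∀ x ∈ chamber K,
      κ/4 * pd2 j Φ x
        + ∑ k ∈ Finset.univ.erase j,
            (pd k Φ x / (x k - x j) - h k * Φ x / (x k - x j)^2)
      = ((∑ k ∈ Finset.univ.erase j, ∑ l ∈ (Finset.univ.erase j).erase k,
            α k * α l * (κ * (α j)^2 - 1) / ((x k - x j) * (x l - x j)))
          + ∑ k ∈ Finset.univ.erase j,
            (α j * α k * (κ * α j * α k - κ/2 + 2) - h k) / (x k - x j)^2) * Φ x := by
  intro x hx
  have hGΦ : Φ = CGaux.G α := funext hΦ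
  subst hGΦ
  have key := CGaux.scalar_identity α κ h j hx
  rw [CGaux.pd2_G α j hx]
  rw [show (∑ k ∈ Finset.univ.erase j,
        (pd k (CGaux.G α) x / (x k - x j) - h k * CGaux.G α x / (x k - x j)^2))
      = ∑ k ∈ Finset.univ.erase j,
        CGaux.G α x * (CGaux.T α k x / (x k - x j) - h k / (x k - x j)^2) from
    Finset.sum_congr rfl fun k _ => by rw [CGaux.pd_G α k hx]; ring]
  rw [← Finset.mul_sum]
  linear_combination (CGaux.G α x) * key

end
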